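/- Let F and F' be adjacent faces of a triangulation whose z-monodromies M_F and M_{F'} are both the identity permutation. Then there is a unique (up to reversal) zigzag whose face shadow contains both F and F', and this face shadow is a cyclic sequence of the form F, F', ..., F', ..., F', F, ..., F, ..., i.e., the three occurrences of F' all appear between the first and second occurrences of F. -/

import Mathlib

open Finset

/-- A (combinatorial) triangulation of a connected closed surface:
a finite set of triangular faces such that every edge lies in exactly two
faces, two distinct faces meet in at most an edge, and the dual graph is
connected. -/
structure Triangulation (V : Type) [Fintype V] [DecidableEq V] where
  faces : Finset (Finset V)
  faces_nonempty : faces.Nonempty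
  card_eq : ∀ F ∈ faces, F.card = 3
  edge_two_faces : ∀ e : Finset V, e.card = 2 → (∃ F ∈ faces, e ⊆ F) →
      (faces.filter fun F => e ⊆ F).card = 2
  inter_le : ∀ F ∈ faces, ∀ F' ∈ faces, F ≠ F' → (F ∩ F').card ≤ 2
  connected : ∀ F ∈ faces, ∀ F' ∈ faces,
      Relation.ReflTransGen
        (fun A B => A ∈ faces ∧ B ∈ faces ∧ (A ∩ B).card = 2) F F'

namespace Triangulation

variable {V : Type} [Fintype V] [DecidableEq V] (T : Triangulation V)

/-- `e` is an edge of the triangulation. -/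
def IsEdge (e : Finset V) : Prop := e.card = 2 ∧ ∃ F ∈ T.faces, e ⊆ F

/-- A zigzag sequence: consecutive edges are adjacent (distinct, sharing a
vertex and a face), the faces containing consecutive pairs are distinct, and
edges two apart are disjoint. -/
def IsZigzagSeq (f : ℕ → Finset V) : Prop :=
  (∀ i, T.IsEdge (f i)) ∧
  (∀ i, f i ≠ f (i + 1) ∧ (f i ∩ f (i + 1)).Nonempty ∧
      ∃ F ∈ T.faces, f i ⊆ F ∧ f (i + 1) ⊆ F) ∧
  (∀ i, ∀ F ∈ T.faces, ∀ F' ∈ T.faces,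
      f i ⊆ F → f (i + 1) ⊆ F → f (i + 1) ⊆ F' → f (i + 2) ⊆ F' → F ≠ F') ∧
  (∀ i, f i ∩ f (i + 2) = ∅)

/-- A zigzag: a zigzag sequence together with its (minimal) period. -/
structure Zigzag where
  seq : ℕ → Finset V
  period : ℕ
  period_pos : 0 < period
  periodic : ∀ i, seq (i + period) = seq i
  period_min : ∀ m, 0 < m → (∀ i, seq (i + m) = seq i) → period ≤ m
  isZigzag : T.IsZigzagSeq seq

variable {T}

/-- Two zigzags are the same cyclic sequence (up to a shift). -/
def Zigzag.Equiv (Z Z' : T.Zigzag) : Prop := ∃ k, ∀ i, Z'.seq i = Z.seq (i + k)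

/-- `Z'` is the reversal of `Z` (up to a shift). -/
def Zigzag.IsReverseOf (Z' Z : T.Zigzag) : Prop :=
  ∃ k, ∀ i, Z'.seq i = Z.seq (k + Z.period - i % Z.period)

/-- The zigzag `Z` contains an edge of the face `F`. -/
def Zigzag.Meets (Z : T.Zigzag) (F : Finset V) : Prop := ∃ i, Z.seq i ⊆ F

/-- `F` is the `i`-th face of the face shadow of `Z`, i.e. the face containing
the `i`-th and `(i+1)`-st edges of `Z`. -/
def Zigzag.ShadowAt (Z : T.Zigzag) (i : ℕ) (F : Finset V) : Prop :=
  F ∈ T.faces ∧ Z.seq i ⊆ F ∧ Z.seq (i + 1) ⊆ F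

/-- At position `i`, the zigzag `Z` traverses the oriented edge from `x`
to `y` (the head `y` is the vertex shared with the next edge). -/
def Zigzag.Passes (Z : T.Zigzag) (i : ℕ) (x y : V) : Prop :=
  Z.seq i = {x, y} ∧ x ≠ y ∧ y ∈ Z.seq (i + 1)

variable (T)

/-- The triangulation is locally z-knotted in the face `F`:
`𝒵(F) = {Z, Z⁻¹}`. -/
def LocallyZKnotted (F : Finset V) : Prop :=
  (∃ Z : T.Zigzag, Z.Meets F) ∧
  ∀ Z Z' : T.Zigzag, Z.Meets F → Z'.Meets F → Z.Equiv Z' ∨ Z'.IsReverseOf Z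

/-- The triangulation is z-knotted: it has exactly one zigzag up to
reversal. -/
def ZKnotted : Prop :=
  Nonempty T.Zigzag ∧ ∀ Z Z' : T.Zigzag, Z.Equiv Z' ∨ Z'.IsReverseOf Z

/-- The z-monodromy relation of the face `F`: `M_F` sends the oriented edge
`(x,y)` of `F` to the oriented edge `(u,v)` of `F`.  Here `(u,v)` is the first
oriented edge of `F` occurring in the zigzag through `D_F⁻¹(x,y), (x,y)`
after `(x,y)`. -/
def MonodromyRel (F : Finset V) (x y u v : V) : Prop :=
  x ∈ F ∧ y ∈ F ∧
  ∃ Z : T.Zigzag, ∃ i j : ℕ,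
    (∃ z, z ∈ F ∧ z ≠ x ∧ z ≠ y ∧ Z.Passes i z x) ∧
    Z.Passes (i + 1) x y ∧
    i + 1 < j ∧ Z.Passes j u v ∧ u ∈ F ∧ v ∈ F ∧
    (∀ k, i + 1 < k → k < j → ∀ a b, a ∈ F → b ∈ F → ¬ Z.Passes k a b)

/-- The z-monodromy of `F` is the identity (type (M1)). -/
def MFIsId (F : Finset V) : Prop :=
  ∀ x y, x ∈ F → y ∈ F → x ≠ y → T.MonodromyRel F x y x y

/-- The z-monodromy of `F` is `D_F` (type (M2)). -/
def MFIsD (F : Finset V) : Prop :=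
  ∀ x y z : V, ({x, y, z} : Finset V) = F → x ≠ y → y ≠ z → x ≠ z →
    T.MonodromyRel F x y y z

/-- The z-monodromy of `F` is `D_F⁻¹` (type (M5)). -/
def MFIsDInv (F : Finset V) : Prop :=
  ∀ x y z : V, ({x, y, z} : Finset V) = F → x ≠ y → y ≠ z → x ≠ z →
    T.MonodromyRel F x y z x

/-- The z-monodromy of `F` is of type (M3):
`M_F = (-e₁,e₂,e₃)(-e₃,-e₂,e₁)` for a cycle `(e₁,e₂,e₃)` of `D_F`. -/
def MFIsM3 (F : Finset V) : Prop :=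
  ∃ x y z : V, ({x, y, z} : Finset V) = F ∧ x ≠ y ∧ y ≠ z ∧ x ≠ z ∧
    T.MonodromyRel F y x y z ∧ T.MonodromyRel F y z z x ∧
    T.MonodromyRel F z x y x ∧ T.MonodromyRel F x z z y ∧
    T.MonodromyRel F z y x y ∧ T.MonodromyRel F x y x z

/-- The z-monodromy of `F` is of type (M4):
`M_F = (e₁,-e₂)(e₂,-e₁)` with `e₃, -e₃` fixed, for a cycle `(e₁,e₂,e₃)`
of `D_F`. -/
def MFIsM4 (F : Finset V) : Prop :=
  ∃ x y z : V, ({x, y, z} : Finset V) = F ∧ x ≠ y ∧ y ≠ z ∧ x ≠ z ∧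
    T.MonodromyRel F x y z y ∧ T.MonodromyRel F z y x y ∧
    T.MonodromyRel F y z y x ∧ T.MonodromyRel F y x y z ∧
    T.MonodromyRel F z x z x ∧ T.MonodromyRel F x z x z

/-- The dual graph: vertices are faces, adjacent iff they share an edge. -/
def dualGraph : SimpleGraph {F : Finset V // F ∈ T.faces} where
  Adj A B := A ≠ B ∧ ((A : Finset V) ∩ (B : Finset V)).card = 2
  symm := by
    constructor
    intro A B h
    exact ⟨h.1.symm, by rw [Finset.inter_comm]; exact h.2⟩
  loopless := by constructor; intro A h; exact h.1 rfl

end Triangulation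

namespace Triangulation

variable {V : Type} [Fintype V] [DecidableEq V] {T : Triangulation V}

set_option linter.unusedSectionVars false

section Helpers

variable {f g : ℕ → Finset V}

lemma aux_pair_of_mem {s : Finset V} (h2 : s.card = 2) {a : V} (ha : a ∈ s) :
    ∃ c, c ≠ a ∧ s = {c, a} := by
  obtain ⟨u, v, huv, rfl⟩ := Finset.card_eq_two.mp h2
  rcases Finset.mem_insert.mp ha with rfl | h
  · exact ⟨v, huv.symm, Finset.pair_comm _ _⟩
  · obtain rfl := Finset.mem_singleton.mp h
    exact ⟨u, huv, rfl⟩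

lemma zz_edge_card (hf : T.IsZigzagSeq f) (i : ℕ) : (f i).card = 2 := (hf.1 i).1

lemma zz_inter_card (hf : T.IsZigzagSeq f) (i : ℕ) : (f i ∩ f (i+1)).card = 1 := by
  obtain ⟨hne, hnon, -⟩ := hf.2.1 i
  have e1 := zz_edge_card hf i
  have e2 := zz_edge_card hf (i+1)
  have h1 : 1 ≤ (f i ∩ f (i+1)).card := Finset.card_pos.mpr hnon
  have h2 : (f i ∩ f (i+1)).card ≤ 2 :=
    le_trans (Finset.card_le_card Finset.inter_subset_left) (le_of_eq e1)
  rcases Nat.lt_or_ge (f i ∩ f (i+1)).card 2 with h | h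
  · omega
  · exfalso
    have hq : f i ∩ f (i+1) = f i :=
      Finset.eq_of_subset_of_card_le Finset.inter_subset_left (by omega)
    have hss : f i ⊆ f (i+1) := hq ▸ Finset.inter_subset_right
    exact hne (Finset.eq_of_subset_of_card_le hss (by omega))

lemma zz_union_card (hf : T.IsZigzagSeq f) (i : ℕ) : (f i ∪ f (i+1)).card = 3 := by
  have := Finset.card_union_add_card_inter (f i) (f (i+1))
  have h1 := zz_inter_card hf i
  have h2 := zz_edge_card hf i
  have h3 := zz_edge_card hf (i+1)
  omega

lemma zz_union_face (hf : T.IsZigzagSeq f) (i : ℕ) : f i ∪ f (i+1) ∈ T.faces := by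
  obtain ⟨-, -, G, hG, h1, h2⟩ := hf.2.1 i
  have hsub : f i ∪ f (i+1) ⊆ G := Finset.union_subset h1 h2
  have : f i ∪ f (i+1) = G := by
    apply Finset.eq_of_subset_of_card_le hsub
    rw [T.card_eq G hG, zz_union_card hf]
  rwa [this]

lemma zz_shadow_eq (hf : T.IsZigzagSeq f) (i : ℕ) {G : Finset V} (hG : G ∈ T.faces)
    (h1 : f i ⊆ G) (h2 : f (i+1) ⊆ G) : G = f i ∪ f (i+1) :=
  (Finset.eq_of_subset_of_card_le (Finset.union_subset h1 h2)
    (by rw [T.card_eq G hG, zz_union_card hf])).symm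

lemma faces_of_edge {e : Finset V} (he : e.card = 2) {A B C : Finset V}
    (hA : A ∈ T.faces) (heA : e ⊆ A) (hB : B ∈ T.faces) (heB : e ⊆ B)
    (hC : C ∈ T.faces) (heC : e ⊆ C) (hAB : A ≠ B) : C = A ∨ C = B := by
  have hcard := T.edge_two_faces e he ⟨A, hA, heA⟩
  by_contra hcon
  push_neg at hcon
  have hsub : ({A, B, C} : Finset (Finset V)) ⊆ T.faces.filter (fun F => e ⊆ F) := by
    intro X hX
    simp only [Finset.mem_insert, Finset.mem_singleton] at hX
    rcases hX with rfl | rfl | rfl <;> simp [Finset.mem_filter, hA, hB, hC, heA, heB, heC]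
  have h3 : ({A, B, C} : Finset (Finset V)).card = 3 := by
    rw [Finset.card_insert_of_notMem (by simp [hAB, hcon.1.symm]),
      Finset.card_insert_of_notMem (by simp [hcon.2.symm]), Finset.card_singleton]
  have := Finset.card_le_card hsub
  omega


lemma zz_faces_ne (hf : T.IsZigzagSeq f) (i : ℕ) :
    f i ∪ f (i+1) ≠ f (i+1) ∪ f (i+2) := by
  exact hf.2.2.1 i _ (zz_union_face hf i) _ (zz_union_face hf (i+1))
    Finset.subset_union_left Finset.subset_union_right
    Finset.subset_union_left Finset.subset_union_right

lemma char_next (hf : T.IsZigzagSeq f) (i : ℕ) {B : Finset V} (hB : B ∈ T.faces)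
    (hsub : f (i+1) ⊆ B) (hne : B ≠ f i ∪ f (i+1)) :
    f (i+2) = B \ (f i ∩ f (i+1)) := by
  have hA : f i ∪ f (i+1) ∈ T.faces := zz_union_face hf i
  have hB0 : f (i+1) ∪ f (i+2) ∈ T.faces := zz_union_face hf (i+1)
  have hAB0 : f i ∪ f (i+1) ≠ f (i+1) ∪ f (i+2) := zz_faces_ne hf i
  have he2 : (f (i+1)).card = 2 := zz_edge_card hf (i+1)
  have hBeq : B = f (i+1) ∪ f (i+2) := by
    rcases faces_of_edge he2 hA Finset.subset_union_right hB0 Finset.subset_union_left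
      hB hsub hAB0 with h | h
    · exact absurd h hne
    · exact h
  subst hBeq
  have hint : f i ∩ f (i+1) ⊆ f (i+1) ∪ f (i+2) :=
    Finset.inter_subset_right.trans Finset.subset_union_left
  have hcard : ((f (i+1) ∪ f (i+2)) \ (f i ∩ f (i+1))).card = 2 := by
    rw [Finset.card_sdiff_of_subset hint, zz_union_card hf (i+1), zz_inter_card hf i]
  have hss : f (i+2) ⊆ (f (i+1) ∪ f (i+2)) \ (f i ∩ f (i+1)) := by
    intro v hv
    rw [Finset.mem_sdiff]
    refine ⟨Finset.mem_union_right _ hv, fun hvi => ?_⟩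
    have : v ∈ f i ∩ f (i+2) := Finset.mem_inter.mpr ⟨(Finset.mem_inter.mp hvi).1, hv⟩
    rw [hf.2.2.2 i] at this
    exact absurd this (Finset.notMem_empty v)
  exact (Finset.eq_of_subset_of_card_le hss (by rw [hcard, zz_edge_card hf (i+2)])).symm.symm

lemma char_prev (hf : T.IsZigzagSeq f) (i : ℕ) {A : Finset V} (hA : A ∈ T.faces)
    (hsub : f (i+1) ⊆ A) (hne : A ≠ f (i+1) ∪ f (i+2)) :
    f i = A \ (f (i+1) ∩ f (i+2)) := by
  have hA0 : f i ∪ f (i+1) ∈ T.faces := zz_union_face hf i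
  have hB0 : f (i+1) ∪ f (i+2) ∈ T.faces := zz_union_face hf (i+1)
  have hAB0 : f i ∪ f (i+1) ≠ f (i+1) ∪ f (i+2) := zz_faces_ne hf i
  have he2 : (f (i+1)).card = 2 := zz_edge_card hf (i+1)
  have hAeq : A = f i ∪ f (i+1) := by
    rcases faces_of_edge he2 hA0 Finset.subset_union_right hB0 Finset.subset_union_left
      hA hsub hAB0 with h | h
    · exact h
    · exact absurd h hne
  subst hAeq
  have hint : f (i+1) ∩ f (i+2) ⊆ f i ∪ f (i+1) :=
    Finset.inter_subset_left.trans Finset.subset_union_right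
  have hcard : ((f i ∪ f (i+1)) \ (f (i+1) ∩ f (i+2))).card = 2 := by
    rw [Finset.card_sdiff_of_subset hint, zz_union_card hf i, zz_inter_card hf (i+1)]
  have hss : f i ⊆ (f i ∪ f (i+1)) \ (f (i+1) ∩ f (i+2)) := by
    intro v hv
    rw [Finset.mem_sdiff]
    refine ⟨Finset.mem_union_left _ hv, fun hvi => ?_⟩
    have : v ∈ f i ∩ f (i+2) := Finset.mem_inter.mpr ⟨hv, (Finset.mem_inter.mp hvi).2⟩
    rw [hf.2.2.2 i] at this
    exact absurd this (Finset.notMem_empty v)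
  exact Finset.eq_of_subset_of_card_le hss (by rw [hcard, zz_edge_card hf i])

lemma fwd_step (hf : T.IsZigzagSeq f) (hg : T.IsZigzagSeq g) {i j : ℕ}
    (h0 : f i = g j) (h1 : f (i+1) = g (j+1)) : f (i+2) = g (j+2) := by
  have hB : g (j+1) ∪ g (j+2) ∈ T.faces := zz_union_face hg (j+1)
  have hBne : g (j+1) ∪ g (j+2) ≠ f i ∪ f (i+1) := by
    rw [h0, h1]; exact (zz_faces_ne hg j).symm
  have e1 := char_next hf i hB (h1 ▸ Finset.subset_union_left) hBne
  have e2 := char_next hg j hB Finset.subset_union_left (zz_faces_ne hg j).symm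
  rw [e1, h0, h1, ← e2]

lemma back_step (hf : T.IsZigzagSeq f) (hg : T.IsZigzagSeq g) {i j : ℕ}
    (h1 : f (i+1) = g (j+1)) (h2 : f (i+2) = g (j+2)) : f i = g j := by
  have hA : g j ∪ g (j+1) ∈ T.faces := zz_union_face hg j
  have hAne : g j ∪ g (j+1) ≠ f (i+1) ∪ f (i+2) := by
    rw [h1, h2]; exact zz_faces_ne hg j
  have e1 := char_prev hf i hA (h1 ▸ Finset.subset_union_right) hAne
  have e2 := char_prev hg j hA Finset.subset_union_right (zz_faces_ne hg j)
  rw [e1, h1, h2, ← e2]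

lemma rev_step (hf : T.IsZigzagSeq f) (hg : T.IsZigzagSeq g) {i j : ℕ}
    (h0 : f i = g (j+2)) (h1 : f (i+1) = g (j+1)) : f (i+2) = g j := by
  have hB : g j ∪ g (j+1) ∈ T.faces := zz_union_face hg j
  have hBne : g j ∪ g (j+1) ≠ f i ∪ f (i+1) := by
    rw [h0, h1, Finset.union_comm (g (j+2))]; exact zz_faces_ne hg j
  have e1 := char_next hf i hB (h1 ▸ Finset.subset_union_right) hBne
  have e2 := char_prev hg j hB Finset.subset_union_right (zz_faces_ne hg j)
  rw [e1, h0, h1, Finset.inter_comm (g (j+2)), ← e2]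

lemma agree_fwd (hf : T.IsZigzagSeq f) (hg : T.IsZigzagSeq g) {i j : ℕ}
    (h0 : f i = g j) (h1 : f (i+1) = g (j+1)) : ∀ d, f (i+d) = g (j+d) := by
  have key : ∀ d, f (i+d) = g (j+d) ∧ f (i+d+1) = g (j+d+1) := by
    intro d
    induction d with
    | zero => exact ⟨h0, h1⟩
    | succ n ih =>
      have h2 : f (i+n+2) = g (j+n+2) := fwd_step hf hg ih.1 ih.2
      constructor
      · have e1 : i + (n+1) = i + n + 1 := by omega
        have e2 : j + (n+1) = j + n + 1 := by omega
        rw [e1, e2]; exact ih.2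
      · have e1 : i + (n+1) + 1 = i + n + 2 := by omega
        have e2 : j + (n+1) + 1 = j + n + 2 := by omega
        rw [e1, e2]; exact h2
  exact fun d => (key d).1



lemma Zigzag.seq_add_mul (Z : T.Zigzag) (c n : ℕ) : Z.seq (n + c * Z.period) = Z.seq n := by
  induction c with
  | zero => simp
  | succ k ih =>
    have e : n + (k+1) * Z.period = (n + k * Z.period) + Z.period := by ring
    rw [e, Z.periodic, ih]

lemma Zigzag.seq_congr_mod (Z : T.Zigzag) {a b : ℕ} (h : a % Z.period = b % Z.period) :
    Z.seq a = Z.seq b := by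
  have ea : a = a % Z.period + (a / Z.period) * Z.period := by
    rw [Nat.mul_comm, Nat.mod_add_div]
  have eb : b = b % Z.period + (b / Z.period) * Z.period := by
    rw [Nat.mul_comm, Nat.mod_add_div]
  rw [ea, eb, Z.seq_add_mul, Z.seq_add_mul, h]

lemma Zigzag.period_dvd (Z : T.Zigzag) {d : ℕ} (h : ∀ n, Z.seq (n + d) = Z.seq n) :
    Z.period ∣ d := by
  have hper : ∀ n, Z.seq (n + d % Z.period) = Z.seq n := by
    intro n
    have e : n + d = (n + d % Z.period) + (d / Z.period) * Z.period := by
      have h1 := Nat.mod_add_div d Z.period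
      have h2 : (d / Z.period) * Z.period = Z.period * (d / Z.period) := Nat.mul_comm _ _
      omega
    have := h n
    rw [e, Z.seq_add_mul] at this
    exact this
  rcases Nat.eq_zero_or_pos (d % Z.period) with h0 | h0
  · exact Nat.dvd_of_mod_eq_zero h0
  · have := Z.period_min _ h0 hper
    have := Nat.mod_lt d Z.period_pos
    omega

lemma Zigzag.global_of_tail (Z : T.Zigzag) (i q : ℕ)
    (h : ∀ d, Z.seq (i + d + q) = Z.seq (i + d)) : ∀ n, Z.seq (n + q) = Z.seq n := by
  have key : ∀ m, Z.seq (i - m + q) = Z.seq (i - m) ∧ Z.seq (i - m + 1 + q) = Z.seq (i - m + 1) := by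
    intro m
    induction m with
    | zero =>
      constructor
      · simpa using h 0
      · have := h 1; have e : i + 1 = i + 1 := rfl
        simpa [Nat.add_comm, Nat.add_assoc, Nat.add_left_comm] using h 1
    | succ k ih =>
      rcases Nat.lt_or_ge k i with hk | hk
      · have e1 : i - (k+1) + 1 = i - k := by omega
        have e2 : i - (k+1) + 2 = i - k + 1 := by omega
        constructor
        · symm
          apply back_step Z.isZigzag Z.isZigzag (i := i - (k+1)) (j := i - (k+1) + q)
          · rw [e1]
            have e3 : i - (k+1) + q + 1 = i - k + q := by omega
            rw [e3]; exact ih.1.symm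
          · rw [e2]
            have e3 : i - (k+1) + q + 2 = i - k + 1 + q := by omega
            rw [e3]; exact ih.2.symm
        · rw [e1]; exact ih.1
      · have e1 : i - (k+1) = i - k := by omega
        rw [e1]; exact ih
  intro n
  rcases Nat.lt_or_ge n i with hn | hn
  · have := (key (i - n)).1
    have e : i - (i - n) = n := by omega
    rwa [e] at this
  · have := h (n - i)
    have e : i + (n - i) = n := by omega
    rwa [e] at this

lemma Zigzag.pair_eq_dvd (Z : T.Zigzag) {s s' : ℕ} (hle : s ≤ s')
    (h0 : Z.seq s = Z.seq s') (h1 : Z.seq (s+1) = Z.seq (s'+1)) :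
    Z.period ∣ (s' - s) := by
  have hag := agree_fwd Z.isZigzag Z.isZigzag h0 h1
  apply Z.period_dvd
  apply Z.global_of_tail s
  intro d
  have := hag d
  have e : s + d + (s' - s) = s' + d := by omega
  rw [e]; exact this.symm



lemma return_lemma (Z : T.Zigzag) {F : Finset V} (hFf : F ∈ T.faces) (hM : T.MFIsId F)
    {z a b : V} (hz : z ∈ F) (ha : a ∈ F) (hb : b ∈ F)
    (hza : z ≠ a) (hzb : z ≠ b) (hab : a ≠ b) (n : ℕ)
    (h0 : Z.seq n = {z, a}) (h1 : Z.seq (n+1) = {a, b}) :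
    ∃ m, n + 4 ≤ m ∧ Z.seq m = {a, b} ∧ Z.seq (m+1) = {b, z} ∧
      a ∈ Z.seq (m-1) ∧ b ∉ Z.seq (m-1) ∧
      (∀ G ∈ T.faces, Z.seq m ⊆ G → G ≠ F → Z.seq (m-1) ⊆ G) ∧
      (∀ k, n + 1 < k → k < m → ∀ α β, α ∈ F → β ∈ F → ¬ Z.Passes k α β) := by
  have hFeq : F = {z, a, b} := by
    have hsub : ({z, a, b} : Finset V) ⊆ F := by
      intro v hv; simp only [Finset.mem_insert, Finset.mem_singleton] at hv
      rcases hv with rfl | rfl | rfl <;> assumption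
    have hc : ({z, a, b} : Finset V).card = 3 := by
      rw [Finset.card_insert_of_notMem (by simp [hza, hzb]),
        Finset.card_insert_of_notMem (by simp [hab]), Finset.card_singleton]
    exact (Finset.eq_of_subset_of_card_le hsub (by rw [T.card_eq F hFf, hc])).symm
  obtain ⟨-, -, Z₀, i₀, j₀, ⟨z₀, hz₀F, hz₀a, hz₀b, hP0⟩, hP1, hij, hPj, -, -, hexcl⟩ :=
    hM a b ha hb hab
  have hz₀ : z = z₀ := by
    rw [hFeq] at hz₀F
    simp only [Finset.mem_insert, Finset.mem_singleton] at hz₀F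
    tauto
  subst hz₀
  have hag : ∀ d, Z₀.seq (i₀ + d) = Z.seq (n + d) :=
    agree_fwd Z₀.isZigzag Z.isZigzag (by rw [hP0.1, h0]) (by rw [hP1.1, h1])
  have hm : n + (j₀ - i₀) = n + (j₀ - i₀) := rfl
  generalize hmdef : n + (j₀ - i₀) = m
  have hmeq : m = n + (j₀ - i₀) := hmdef.symm
  have hseqm : Z.seq m = {a, b} := by
    have hh := hag (j₀ - i₀)
    rw [show i₀ + (j₀ - i₀) = j₀ by omega] at hh
    rw [hmeq, ← hh, hPj.1]
  have hbm1 : b ∈ Z.seq (m+1) := by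
    have hh := hag (j₀ - i₀ + 1)
    rw [show i₀ + (j₀ - i₀ + 1) = j₀ + 1 by omega] at hh
    rw [hmeq, show n + (j₀ - i₀) + 1 = n + (j₀ - i₀ + 1) by omega, ← hh]
    exact hPj.2.2
  have hK : ∀ k, n + 1 < k → k < m → ∀ α β, α ∈ F → β ∈ F → ¬ Z.Passes k α β := by
    intro k hk1 hk2 α β hα hβ hP
    have h1' := hag (k - n)
    have h2' := hag (k - n + 1)
    rw [show n + (k - n) = k by omega] at h1'
    rw [show n + (k - n + 1) = k + 1 by omega] at h2'
    refine hexcl (i₀ + (k - n)) (by omega) (by omega) α β hα hβ ?_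
    exact ⟨by rw [h1', hP.1], hP.2.1,
      by rw [show i₀ + (k - n) + 1 = i₀ + (k - n + 1) by omega, h2']; exact hP.2.2⟩
  have hmge2 : m ≥ n + 2 := by omega
  have hmne2 : m ≠ n + 2 := by
    intro h
    have hd := Z.isZigzag.2.2.2 n
    have hmem : a ∈ Z.seq n ∩ Z.seq (n+2) := by
      rw [h0, ← h, hseqm]; simp
    rw [hd] at hmem; simp at hmem
  have hmne3 : m ≠ n + 3 := by
    intro h
    have hd := Z.isZigzag.2.2.2 (n+1)
    have hmem : a ∈ Z.seq (n+1) ∩ Z.seq (n+1+2) := by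
      rw [h1, show n+1+2 = n+3 by omega, ← h, hseqm]; simp
    rw [hd] at hmem; simp at hmem
  have hm4 : n + 4 ≤ m := by omega
  have hdisj := Z.isZigzag.2.2.2 (m-1)
  have em1 : m - 1 + 1 = m := by omega
  have em2 : m - 1 + 2 = m + 1 := by omega
  have hbnot : b ∉ Z.seq (m-1) := by
    intro hbmem
    have hmem : b ∈ Z.seq (m-1) ∩ Z.seq (m-1+2) := by
      rw [em2]; exact Finset.mem_inter.mpr ⟨hbmem, hbm1⟩
    rw [hdisj] at hmem; simp at hmem
  have hamem : a ∈ Z.seq (m-1) := by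
    obtain ⟨-, hnon, -⟩ := Z.isZigzag.2.1 (m-1)
    obtain ⟨v, hv⟩ := hnon
    rw [em1] at hv
    have hv1 := (Finset.mem_inter.mp hv).1
    have hv2 := (Finset.mem_inter.mp hv).2
    rw [hseqm] at hv2
    simp only [Finset.mem_insert, Finset.mem_singleton] at hv2
    rcases hv2 with rfl | rfl
    · exact hv1
    · exact absurd hv1 hbnot
  have hface : Z.seq (m-1) ∪ Z.seq m ∈ T.faces := by
    have hh := zz_union_face Z.isZigzag (m-1); rwa [em1] at hh
  have habF : Z.seq m ⊆ F := by
    rw [hseqm, hFeq]; intro v hv; simp only [Finset.mem_insert, Finset.mem_singleton] at hv ⊢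
    tauto
  have hfne : Z.seq (m-1) ∪ Z.seq m ≠ F := by
    intro heq
    obtain ⟨c, hca, hcrep⟩ := aux_pair_of_mem (zz_edge_card Z.isZigzag (m-1)) hamem
    have hcF : c ∈ F := by
      rw [← heq]; exact Finset.mem_union_left _ (by rw [hcrep]; simp)
    have hpass : Z.Passes (m-1) c a := ⟨hcrep, hca, by rw [em1, hseqm]; simp⟩
    exact hK (m-1) (by omega) (by omega) c a hcF ha hpass
  have hoth : ∀ G ∈ T.faces, Z.seq m ⊆ G → G ≠ F → Z.seq (m-1) ⊆ G := by
    intro G hG hsubG hGF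
    rcases faces_of_edge (zz_edge_card Z.isZigzag m) hFf habF hface
      Finset.subset_union_right hG hsubG (Ne.symm hfne) with h | h
    · exact absurd h hGF
    · rw [h]; exact Finset.subset_union_left
  have hfneMA : Z.seq (m-1) ∪ Z.seq m ≠ Z.seq m ∪ Z.seq (m+1) := by
    have hh := zz_faces_ne Z.isZigzag (m-1); rwa [em1, em2] at hh
  have hfaceM : Z.seq m ∪ Z.seq (m+1) = F := by
    rcases faces_of_edge (zz_edge_card Z.isZigzag m) hface Finset.subset_union_right
      hFf habF (zz_union_face Z.isZigzag m) Finset.subset_union_left hfne with h | h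
    · exact absurd h.symm hfneMA
    · exact h
  have hseqm1 : Z.seq (m+1) = {b, z} := by
    have hsubF : Z.seq (m+1) ⊆ F := hfaceM ▸ Finset.subset_union_right
    have hanot : a ∉ Z.seq (m+1) := by
      intro hmem
      have hmem2 : a ∈ Z.seq (m-1) ∩ Z.seq (m-1+2) := by
        rw [em2]; exact Finset.mem_inter.mpr ⟨hamem, hmem⟩
      rw [hdisj] at hmem2; simp at hmem2
    have hzsub : Z.seq (m+1) ⊆ {b, z} := by
      intro v hv
      have hvF := hsubF hv
      rw [hFeq] at hvF
      simp only [Finset.mem_insert, Finset.mem_singleton] at hvF ⊢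
      rcases hvF with rfl | rfl | rfl
      · right; rfl
      · exact absurd hv hanot
      · left; rfl
    exact Finset.eq_of_subset_of_card_le hzsub (by
      rw [Finset.card_insert_of_notMem (by simp [Ne.symm hzb]), Finset.card_singleton,
        zz_edge_card Z.isZigzag (m+1)])
  exact ⟨m, hm4, hseqm, hseqm1, hamem, hbnot, hoth, hK⟩



lemma align_equiv (Z Z' : T.Zigzag) (u s : ℕ)
    (h : ∀ d, Z'.seq (s + d) = Z.seq (u + d)) : Z.Equiv Z' := by
  have hsp : s ≤ s * Z.period := Nat.le_mul_of_pos_right s Z.period_pos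
  refine ⟨u + s * Z.period - s, fun n => ?_⟩
  rcases Nat.lt_or_ge n s with hn | hn
  · have hspp : s * Z.period ≤ s * Z.period * Z'.period :=
      Nat.le_mul_of_pos_right _ Z'.period_pos
    have e1 : Z'.seq n = Z'.seq (n + s * Z.period * Z'.period) :=
      (Z'.seq_add_mul (s * Z.period) n).symm
    have e2 := h (n + s * Z.period * Z'.period - s)
    rw [show s + (n + s * Z.period * Z'.period - s) = n + s * Z.period * Z'.period
      by omega] at e2
    rw [e1, e2]
    obtain ⟨q', hq'⟩ : ∃ q', Z'.period = q' + 1 :=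
      ⟨Z'.period - 1, by have := Z'.period_pos; omega⟩
    have hring : s * q' * Z.period + s * Z.period = s * Z.period * Z'.period := by
      rw [hq']; ring
    have e3 : u + (n + s * Z.period * Z'.period - s)
        = (n + (u + s * Z.period - s)) + s * q' * Z.period := by omega
    rw [e3, Z.seq_add_mul]
  · have e2 := h (n - s)
    rw [show s + (n - s) = n by omega] at e2
    rw [e2]
    have e3 : n + (u + s * Z.period - s) = (u + (n - s)) + s * Z.period := by omega
    rw [e3, Z.seq_add_mul]

lemma rev_agree (Z Z' : T.Zigzag) (u s N : ℕ)
    (h0 : Z'.seq s = Z.seq (u+1)) (h1 : Z'.seq (s+1) = Z.seq u) :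
    ∀ d, d ≤ u + 1 + N * Z.period →
      Z'.seq (s + d) = Z.seq (u + 1 + N * Z.period - d) := by
  have key : ∀ d, (d ≤ u + 1 + N * Z.period →
        Z'.seq (s + d) = Z.seq (u + 1 + N * Z.period - d)) ∧
      (d + 1 ≤ u + 1 + N * Z.period →
        Z'.seq (s + d + 1) = Z.seq (u + 1 + N * Z.period - (d+1))) := by
    intro d
    induction d with
    | zero =>
      constructor
      · intro _
        rw [Nat.add_zero, Nat.sub_zero, show u + 1 + N * Z.period = (u+1) + N * Z.period
          by omega, Z.seq_add_mul]
        exact h0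
      · intro _
        rw [Nat.add_zero, show u + 1 + N * Z.period - 1 = u + N * Z.period by omega,
          Z.seq_add_mul]
        exact h1
    | succ k ih =>
      constructor
      · intro hk
        have := ih.2 hk
        rwa [show s + k + 1 = s + (k+1) by omega] at this
      · intro hk
        have ha := ih.1 (by omega)
        have hb := ih.2 (by omega)
        have hstep := rev_step Z'.isZigzag Z.isZigzag (i := s + k)
          (j := u + 1 + N * Z.period - (k+2))
          (by rw [show u + 1 + N * Z.period - (k+2) + 2 = u + 1 + N * Z.period - k
                by omega]; exact ha)
          (by rw [show u + 1 + N * Z.period - (k+2) + 1 = u + 1 + N * Z.period - (k+1)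
                by omega]; exact hb)
        rwa [show s + k + 2 = s + (k+1) + 1 by omega,
          show (k:ℕ) + 1 + 1 = k + 2 by omega] at hstep
  exact fun d hd => (key d).1 hd

lemma align_rev (Z Z' : T.Zigzag) (u s : ℕ)
    (h0 : Z'.seq s = Z.seq (u+1)) (h1 : Z'.seq (s+1) = Z.seq u) :
    Z'.IsReverseOf Z := by
  have hppos := Z.period_pos
  have main : ∀ n, s ≤ n → Z'.seq n = Z.seq (u + 1 + s + Z.period - n % Z.period) := by
    intro n hn
    have hd : n - s ≤ u + 1 + n * Z.period := by
      have : n ≤ n * Z.period := Nat.le_mul_of_pos_right n hppos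
      omega
    have e1 := rev_agree Z Z' u s n h0 h1 (n - s) hd
    rw [show s + (n - s) = n by omega] at e1
    rw [e1]
    apply Z.seq_congr_mod
    -- A := u + 1 + n * Z.period - (n - s), B := u + 1 + s + Z.period - n % Z.period
    have hr : n % Z.period < Z.period := Nat.mod_lt n hppos
    have hnp : n ≤ n * Z.period := Nat.le_mul_of_pos_right n hppos
    have hA : (u + 1 + n * Z.period - (n - s)) + n = (u + 1 + s) + n * Z.period := by
      omega
    have hB : (u + 1 + s + Z.period - n % Z.period) + n % Z.period
        = (u + 1 + s) + Z.period := by omega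
    have h1' : ((u + 1 + n * Z.period - (n - s)) + n) % Z.period
        = (u + 1 + s) % Z.period := by
      rw [hA]; apply Nat.add_mul_mod_self_right
    have h2' : ((u + 1 + s + Z.period - n % Z.period) + n % Z.period) % Z.period
        = (u + 1 + s) % Z.period := by
      rw [hB]; exact Nat.add_mod_right _ _
    have h3' : ((u + 1 + s + Z.period - n % Z.period) + n) % Z.period
        = ((u + 1 + s + Z.period - n % Z.period) + n % Z.period) % Z.period :=
      Nat.ModEq.add_left _ (Nat.mod_mod_of_dvd n dvd_rfl).symm
    have hfin : ((u + 1 + n * Z.period - (n - s)) + n) % Z.period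
        = ((u + 1 + s + Z.period - n % Z.period) + n) % Z.period := by
      rw [h1', h3', h2']
    exact Nat.ModEq.add_right_cancel' n hfin
  refine ⟨u + 1 + s, fun n => ?_⟩
  rcases Nat.lt_or_ge n s with hn | hn
  · have e1 : Z'.seq n = Z'.seq (n + s * Z.period * Z'.period) :=
      (Z'.seq_add_mul (s * Z.period) n).symm
    have hbig : s ≤ n + s * Z.period * Z'.period := by
      have h1' : s ≤ s * Z.period := Nat.le_mul_of_pos_right s hppos
      have h2' : s * Z.period ≤ s * Z.period * Z'.period :=
        Nat.le_mul_of_pos_right _ Z'.period_pos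
      omega
    have e2 := main _ hbig
    have e3 : (n + s * Z.period * Z'.period) % Z.period = n % Z.period := by
      rw [show n + s * Z.period * Z'.period = n + s * Z'.period * Z.period by ring]
      apply Nat.add_mul_mod_self_right
    rw [e1, e2, e3]
  · exact main n hn



lemma shadow_face (Z : T.Zigzag) {k : ℕ} {G : Finset V} (h : Z.ShadowAt k G) :
    G = Z.seq k ∪ Z.seq (k+1) := zz_shadow_eq Z.isZigzag k h.1 h.2.1 h.2.2

lemma shadow_passes (Z : T.Zigzag) {k : ℕ} {G : Finset V} (h : Z.ShadowAt k G) :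
    ∃ α β, α ∈ G ∧ β ∈ G ∧ Z.Passes k α β := by
  obtain ⟨-, hnon, -⟩ := Z.isZigzag.2.1 k
  obtain ⟨v, hv⟩ := hnon
  have hv1 := (Finset.mem_inter.mp hv).1
  have hv2 := (Finset.mem_inter.mp hv).2
  obtain ⟨c, hc, hrep⟩ := aux_pair_of_mem (zz_edge_card Z.isZigzag k) hv1
  exact ⟨c, v, h.2.1 (by rw [hrep]; simp), h.2.1 hv1, hrep, hc, hv2⟩

lemma two_subsets {x y t : V} (hxy : x ≠ y) (hyt : y ≠ t) (hxt : x ≠ t)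
    {s : Finset V} (hs : s ⊆ ({x, y, t} : Finset V)) (h2 : s.card = 2) :
    s = {x, y} ∨ s = {y, t} ∨ s = {t, x} := by
  obtain ⟨a, b, hab, rfl⟩ := Finset.card_eq_two.mp h2
  have hax := hs (Finset.mem_insert_self a {b})
  have hbx := hs (Finset.mem_insert_of_mem (Finset.mem_singleton_self b))
  simp only [Finset.mem_insert, Finset.mem_singleton] at hax hbx
  rcases hax with rfl | rfl | rfl <;> rcases hbx with rfl | rfl | rfl <;>
    first
      | exact absurd rfl hab
      | (left; rfl)
      | (right; left; rfl)
      | (right; right; rfl)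
      | (left; exact Finset.pair_comm _ _)
      | (right; left; exact Finset.pair_comm _ _)
      | (right; right; exact Finset.pair_comm _ _)


end Helpers

end Triangulation
/-- if `F, F'` are adjacent faces whose z-monodromies are both
the identity, then there is a unique (up to reversal) zigzag whose face
shadow contains `F` and `F'`, and in its face shadow the three occurrences
of `F'` all lie between the first and the second occurrence of `F`. -/
theorem adjacent_M1_faces_shadow {V : Type} [Fintype V] [DecidableEq V]
    (T : Triangulation V) (F F' : Finset V)
    (hF : F ∈ T.faces) (hF' : F' ∈ T.faces) (hne : F ≠ F')
    (hadj : (F ∩ F').card = 2)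
    (h1 : T.MFIsId F) (h1' : T.MFIsId F') :
    ∃ Z : T.Zigzag, ∃ a₁ a₂ a₃ b₁ b₂ b₃ : ℕ,
      a₁ < b₁ ∧ b₁ < b₂ ∧ b₂ < b₃ ∧ b₃ < a₂ ∧ a₂ < a₃ ∧ a₃ < a₁ + Z.period ∧
      Z.ShadowAt a₁ F ∧ Z.ShadowAt a₂ F ∧ Z.ShadowAt a₃ F ∧
      Z.ShadowAt b₁ F' ∧ Z.ShadowAt b₂ F' ∧ Z.ShadowAt b₃ F' ∧
      (∀ i, a₁ ≤ i → i < a₁ + Z.period → Z.ShadowAt i F →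
        i = a₁ ∨ i = a₂ ∨ i = a₃) ∧
      (∀ i, a₁ ≤ i → i < a₁ + Z.period → Z.ShadowAt i F' →
        i = b₁ ∨ i = b₂ ∨ i = b₃) ∧
      (∀ Z' : T.Zigzag, (∃ i, Z'.ShadowAt i F) → (∃ j, Z'.ShadowAt j F') →
        Z.Equiv Z' ∨ Z'.IsReverseOf Z) := by
  classical
  open Triangulation in
  have hcardF := T.card_eq F hF
  have hcardF' := T.card_eq F' hF'
  obtain ⟨x, y, hxy, hexy⟩ := Finset.card_eq_two.mp hadj
  have hxI : x ∈ F ∩ F' := by rw [hexy]; simp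
  have hyI : y ∈ F ∩ F' := by rw [hexy]; simp
  have hxF := (Finset.mem_inter.mp hxI).1
  have hxF' := (Finset.mem_inter.mp hxI).2
  have hyF := (Finset.mem_inter.mp hyI).1
  have hyF' := (Finset.mem_inter.mp hyI).2
  -- the third vertex t of F
  have htE : (F \ (F ∩ F')).card = 1 := by
    rw [Finset.card_sdiff_of_subset Finset.inter_subset_left, hcardF, hadj]
  obtain ⟨t, ht⟩ := Finset.card_eq_one.mp htE
  have htmem : t ∈ F \ (F ∩ F') := by rw [ht]; simp
  have htF : t ∈ F := (Finset.mem_sdiff.mp htmem).1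
  have htI : t ∉ F ∩ F' := (Finset.mem_sdiff.mp htmem).2
  have htx : t ≠ x := by rintro rfl; exact htI hxI
  have hty : t ≠ y := by rintro rfl; exact htI hyI
  -- the third vertex w of F'
  have hwE : (F' \ (F ∩ F')).card = 1 := by
    rw [Finset.card_sdiff_of_subset (by rw [Finset.inter_comm]; exact Finset.inter_subset_left),
      hcardF', hadj]
  obtain ⟨w, hw⟩ := Finset.card_eq_one.mp hwE
  have hwmem : w ∈ F' \ (F ∩ F') := by rw [hw]; simp
  have hwF' : w ∈ F' := (Finset.mem_sdiff.mp hwmem).1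
  have hwI : w ∉ F ∩ F' := (Finset.mem_sdiff.mp hwmem).2
  have hwx : w ≠ x := by rintro rfl; exact hwI hxI
  have hwy : w ≠ y := by rintro rfl; exact hwI hyI
  have htw : t ≠ w := by
    rintro rfl
    exact htI (Finset.mem_inter.mpr ⟨htF, hwF'⟩)
  have hFeq : F = {x, y, t} := by
    have hsub : ({x, y, t} : Finset V) ⊆ F := by
      intro v hv; simp only [Finset.mem_insert, Finset.mem_singleton] at hv
      rcases hv with rfl | rfl | rfl <;> assumption
    have hc : ({x, y, t} : Finset V).card = 3 := by
      rw [Finset.card_insert_of_notMem (by simp [hxy, htx.symm]),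
        Finset.card_insert_of_notMem (by simp [hty.symm]), Finset.card_singleton]
    exact (Finset.eq_of_subset_of_card_le hsub (by rw [hcardF, hc])).symm
  have hF'eq : F' = {x, y, w} := by
    have hsub : ({x, y, w} : Finset V) ⊆ F' := by
      intro v hv; simp only [Finset.mem_insert, Finset.mem_singleton] at hv
      rcases hv with rfl | rfl | rfl <;> assumption
    have hc : ({x, y, w} : Finset V).card = 3 := by
      rw [Finset.card_insert_of_notMem (by simp [hxy, hwx.symm]),
        Finset.card_insert_of_notMem (by simp [hwy.symm]), Finset.card_singleton]
    exact (Finset.eq_of_subset_of_card_le hsub (by rw [hcardF', hc])).symm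
  -- seed zigzag from the monodromy of F at (x, y)
  obtain ⟨-, -, Z, i, j', ⟨z₀, hz₀F, hz₀x, hz₀y, hP0⟩, hP1, -, -, -, -, -⟩ :=
    h1 x y hxF hyF hxy
  have hz₀t : t = z₀ := by
    rw [hFeq] at hz₀F
    simp only [Finset.mem_insert, Finset.mem_singleton] at hz₀F
    rcases hz₀F with h' | h' | h'
    · exact absurd h' hz₀x
    · exact absurd h' hz₀y
    · exact h'.symm
  subst hz₀t
  have hseqi : Z.seq i = {t, x} := hP0.1
  have hseqi1 : Z.seq (i+1) = {x, y} := hP1.1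
  -- convenient subsets
  have hsubiF : Z.seq i ⊆ F := by rw [hseqi]; simp [Finset.insert_subset_iff, htF, hxF]
  have hsubi1F : Z.seq (i+1) ⊆ F := by
    rw [hseqi1]; simp [Finset.insert_subset_iff, hxF, hyF]
  have hsubi1F' : Z.seq (i+1) ⊆ F' := by
    rw [hseqi1]; simp [Finset.insert_subset_iff, hxF', hyF']
  have hFun : Z.seq i ∪ Z.seq (i+1) = F :=
    (zz_shadow_eq Z.isZigzag i hF hsubiF hsubi1F).symm
  -- Z.seq (i+2) = {y, w}
  have hint : Z.seq i ∩ Z.seq (i+1) = {x} := by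
    rw [hseqi, hseqi1]
    ext v
    simp only [Finset.mem_inter, Finset.mem_insert, Finset.mem_singleton]
    constructor
    · rintro ⟨h', h''⟩
      rcases h' with rfl | rfl
      · rcases h'' with h'' | h'' <;> [exact absurd h'' htx; exact absurd h'' hty]
      · rfl
    · rintro rfl
      exact ⟨Or.inr rfl, Or.inl rfl⟩
  have hsdiff : F' \ {x} = {y, w} := by
    rw [hF'eq]
    ext v
    simp only [Finset.mem_sdiff, Finset.mem_insert, Finset.mem_singleton]
    constructor
    · rintro ⟨h', h''⟩
      rcases h' with rfl | rfl | rfl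
      · exact absurd rfl h''
      · exact Or.inl rfl
      · exact Or.inr rfl
    · rintro (rfl | rfl)
      · exact ⟨Or.inr (Or.inl rfl), hxy.symm⟩
      · exact ⟨Or.inr (Or.inr rfl), hwx⟩
  have hseqi2 : Z.seq (i+2) = {y, w} := by
    rw [char_next Z.isZigzag i hF' hsubi1F' (by rw [hFun]; exact Ne.symm hne), hint, hsdiff]
  -- six applications of the return lemma
  obtain ⟨j, hj4, hsj, hsj1, hxmem_j, hynot_j, hoth_j, hK1⟩ :=
    return_lemma Z hF h1 htF hxF hyF htx hty hxy i hseqi hseqi1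
  obtain ⟨j₂, hj₂4, hsj₂, hsj₂1, -, -, -, hK2⟩ :=
    return_lemma Z hF h1 hxF hyF htF hxy htx.symm hty.symm j hsj hsj1
  obtain ⟨j₃, hj₃4, hsj₃, hsj₃1, -, -, -, hK3⟩ :=
    return_lemma Z hF h1 hyF htF hxF hty.symm hxy.symm htx j₂ hsj₂ hsj₂1
  obtain ⟨m, hm5, hsm, hsm1, -, -, -, hK1'⟩ :=
    return_lemma Z hF' h1' hxF' hyF' hwF' hxy hwx.symm hwy.symm (i+1) hseqi1
      (by rw [show i+1+1 = i+2 by omega]; exact hseqi2)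
  obtain ⟨m₂, hm₂4, hsm₂, hsm₂1, -, -, -, hK2'⟩ :=
    return_lemma Z hF' h1' hyF' hwF' hxF' hwy.symm hxy.symm hwx m hsm hsm1
  obtain ⟨m₃, hm₃4, hsm₃, hsm₃1, -, -, -, hK3'⟩ :=
    return_lemma Z hF' h1' hwF' hxF' hyF' hwx hwy hxy m₂ hsm₂ hsm₂1
  have hppos := Z.period_pos
  -- j₃ - i is a period, so period ∣ j₃ - i
  have hqtail : ∀ d, Z.seq (i + d + (j₃ - i)) = Z.seq (i + d) := by
    intro d
    have hh := agree_fwd Z.isZigzag Z.isZigzag (i := i) (j := j₃)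
      (by rw [hseqi, hsj₃]) (by rw [hseqi1, hsj₃1]) d
    rw [show i + d + (j₃ - i) = j₃ + d by omega]
    exact hh.symm
  have hdvd : Z.period ∣ (j₃ - i) := Z.period_dvd (Z.global_of_tail i (j₃ - i) hqtail)
  -- more subsets
  have hsubjF : Z.seq j ⊆ F := by rw [hsj]; simp [Finset.insert_subset_iff, hxF, hyF]
  have hsubj1F : Z.seq (j+1) ⊆ F := by
    rw [hsj1]; simp [Finset.insert_subset_iff, hyF, htF]
  have hsubj₂F : Z.seq j₂ ⊆ F := by rw [hsj₂]; simp [Finset.insert_subset_iff, hyF, htF]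
  have hsubj₂1F : Z.seq (j₂+1) ⊆ F := by
    rw [hsj₂1]; simp [Finset.insert_subset_iff, htF, hxF]
  have hsubi2F' : Z.seq (i+2) ⊆ F' := by
    rw [hseqi2]; simp [Finset.insert_subset_iff, hyF', hwF']
  have hsubmF' : Z.seq m ⊆ F' := by rw [hsm]; simp [Finset.insert_subset_iff, hyF', hwF']
  have hsubm1F' : Z.seq (m+1) ⊆ F' := by
    rw [hsm1]; simp [Finset.insert_subset_iff, hwF', hxF']
  have hsubm₂F' : Z.seq m₂ ⊆ F' := by
    rw [hsm₂]; simp [Finset.insert_subset_iff, hwF', hxF']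
  have hsubm₂1F' : Z.seq (m₂+1) ⊆ F' := by
    rw [hsm₂1]; simp [Finset.insert_subset_iff, hxF', hyF']
  -- exactness of F-occurrences on [i, j₃)
  have hExF : ∀ k, i ≤ k → k < j₃ → Z.ShadowAt k F → k = i ∨ k = j ∨ k = j₂ := by
    intro k hk1 hk2 hSh
    have hcases : k = i ∨ k = i + 1 ∨ (i + 1 < k ∧ k < j) ∨ k = j ∨ k = j + 1 ∨
        (j + 1 < k ∧ k < j₂) ∨ k = j₂ ∨ k = j₂ + 1 ∨ (j₂ + 1 < k ∧ k < j₃) := by omega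
    rcases hcases with rfl | rfl | ⟨hg1, hg2⟩ | rfl | rfl | ⟨hg1, hg2⟩ | rfl | rfl | ⟨hg1, hg2⟩
    · exact Or.inl rfl
    · exact absurd rfl
        (Z.isZigzag.2.2.1 i F hF F hF hsubiF hsubi1F hSh.2.1 hSh.2.2)
    · obtain ⟨α, β, hα, hβ, hP⟩ := shadow_passes Z hSh
      exact absurd hP (hK1 k hg1 hg2 α β hα hβ)
    · exact Or.inr (Or.inl rfl)
    · exact absurd rfl
        (Z.isZigzag.2.2.1 j F hF F hF hsubjF hsubj1F hSh.2.1 hSh.2.2)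
    · obtain ⟨α, β, hα, hβ, hP⟩ := shadow_passes Z hSh
      exact absurd hP (hK2 k hg1 hg2 α β hα hβ)
    · exact Or.inr (Or.inr rfl)
    · exact absurd rfl
        (Z.isZigzag.2.2.1 j₂ F hF F hF hsubj₂F hsubj₂1F hSh.2.1 hSh.2.2)
    · obtain ⟨α, β, hα, hβ, hP⟩ := shadow_passes Z hSh
      exact absurd hP (hK3 k hg1 hg2 α β hα hβ)
  -- j₃ = i + period
  have hpq : j₃ = i + Z.period := by
    have hple : Z.period ≤ j₃ - i := Nat.le_of_dvd (by omega) hdvd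
    rcases Nat.lt_or_ge Z.period (j₃ - i) with hlt | hge
    · exfalso
      have hShip : Z.ShadowAt (i + Z.period) F := by
        refine ⟨hF, ?_, ?_⟩
        · rw [Z.periodic i]; exact hsubiF
        · rw [show i + Z.period + 1 = (i+1) + Z.period by omega, Z.periodic]
          exact hsubi1F
      rcases hExF (i + Z.period) (by omega) (by omega) hShip with h' | h' | h'
      · omega
      · have heq : Z.seq j = Z.seq i := by rw [← h', Z.periodic]
        rw [hsj, hseqi] at heq
        have hmem : t ∈ ({x, y} : Finset V) := by rw [heq]; simp
        simp only [Finset.mem_insert, Finset.mem_singleton] at hmem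
        rcases hmem with h'' | h'' <;> [exact htx h''; exact hty h'']
      · have heq : Z.seq j₂ = Z.seq i := by rw [← h', Z.periodic]
        rw [hsj₂, hseqi] at heq
        have hmem : x ∈ ({y, t} : Finset V) := by rw [heq]; simp
        simp only [Finset.mem_insert, Finset.mem_singleton] at hmem
        rcases hmem with h'' | h'' <;> [exact hxy h''; exact htx h''.symm]
    · omega
  -- q' := m₃ - (i+1) is a period
  have hq'tail : ∀ d, Z.seq ((i+1) + d + (m₃ - (i+1))) = Z.seq ((i+1) + d) := by
    intro d
    have hh := agree_fwd Z.isZigzag Z.isZigzag (i := i+1) (j := m₃)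
      (by rw [hseqi1, hsm₃])
      (by rw [hsm₃1, show i+1+1 = i+2 by omega, hseqi2]) d
    rw [show (i+1) + d + (m₃ - (i+1)) = m₃ + d by omega]
    exact hh.symm
  have hdvd' : Z.period ∣ (m₃ - (i+1)) :=
    Z.period_dvd (Z.global_of_tail (i+1) (m₃ - (i+1)) hq'tail)
  -- exactness of F'-occurrences on [i+1, m₃)
  have hExF' : ∀ k, i + 1 ≤ k → k < m₃ → Z.ShadowAt k F' → k = i+1 ∨ k = m ∨ k = m₂ := by
    intro k hk1 hk2 hSh
    have hcases : k = i+1 ∨ k = i+2 ∨ (i + 2 < k ∧ k < m) ∨ k = m ∨ k = m + 1 ∨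
        (m + 1 < k ∧ k < m₂) ∨ k = m₂ ∨ k = m₂ + 1 ∨ (m₂ + 1 < k ∧ k < m₃) := by omega
    rcases hcases with rfl | rfl | ⟨hg1, hg2⟩ | rfl | rfl | ⟨hg1, hg2⟩ | rfl | rfl | ⟨hg1, hg2⟩
    · exact Or.inl rfl
    · exact absurd rfl
        (Z.isZigzag.2.2.1 (i+1) F' hF' F' hF' hsubi1F'
          (by rw [show i+1+1 = i+2 by omega]; exact hsubi2F') hSh.2.1
          (by have := hSh.2.2; rwa [show i+2+1 = i+1+2 by omega] at this))
    · obtain ⟨α, β, hα, hβ, hP⟩ := shadow_passes Z hSh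
      exact absurd hP (hK1' k hg1 hg2 α β hα hβ)
    · exact Or.inr (Or.inl rfl)
    · exact absurd rfl
        (Z.isZigzag.2.2.1 m F' hF' F' hF' hsubmF' hsubm1F' hSh.2.1 hSh.2.2)
    · obtain ⟨α, β, hα, hβ, hP⟩ := shadow_passes Z hSh
      exact absurd hP (hK2' k hg1 hg2 α β hα hβ)
    · exact Or.inr (Or.inr rfl)
    · exact absurd rfl
        (Z.isZigzag.2.2.1 m₂ F' hF' F' hF' hsubm₂F' hsubm₂1F' hSh.2.1 hSh.2.2)
    · obtain ⟨α, β, hα, hβ, hP⟩ := shadow_passes Z hSh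
      exact absurd hP (hK3' k hg1 hg2 α β hα hβ)
  -- m₃ = i + 1 + period
  have hpq' : m₃ = i + 1 + Z.period := by
    have hple : Z.period ≤ m₃ - (i+1) := Nat.le_of_dvd (by omega) hdvd'
    rcases Nat.lt_or_ge Z.period (m₃ - (i+1)) with hlt | hge
    · exfalso
      have hShip : Z.ShadowAt (i + 1 + Z.period) F' := by
        refine ⟨hF', ?_, ?_⟩
        · rw [Z.periodic (i+1)]; exact hsubi1F'
        · rw [show i + 1 + Z.period + 1 = (i+2) + Z.period by omega, Z.periodic]
          exact hsubi2F'
      rcases hExF' (i + 1 + Z.period) (by omega) (by omega) hShip with h' | h' | h'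
      · omega
      · have heq : Z.seq m = Z.seq (i+1) := by rw [← h', Z.periodic]
        rw [hsm, hseqi1] at heq
        have hmem : w ∈ ({x, y} : Finset V) := by rw [← heq]; simp
        simp only [Finset.mem_insert, Finset.mem_singleton] at hmem
        rcases hmem with h'' | h'' <;> [exact hwx h''; exact hwy h'']
      · have heq : Z.seq m₂ = Z.seq (i+1) := by rw [← h', Z.periodic]
        rw [hsm₂, hseqi1] at heq
        have hmem : w ∈ ({x, y} : Finset V) := by rw [← heq]; simp
        simp only [Finset.mem_insert, Finset.mem_singleton] at hmem
        rcases hmem with h'' | h'' <;> [exact hwx h''; exact hwy h'']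
    · omega
  -- Z.seq (j-1) = {x, w} and m₂ = j - 1
  have hsjm1 : Z.seq (j-1) = {x, w} := by
    have hsub' : Z.seq (j-1) ⊆ F' := hoth_j F' hF'
      (by rw [hsj]; simp [Finset.insert_subset_iff, hxF', hyF']) (Ne.symm hne)
    have hsubxw : Z.seq (j-1) ⊆ {x, w} := by
      intro v hv
      have hvF' := hsub' hv
      rw [hF'eq] at hvF'
      simp only [Finset.mem_insert, Finset.mem_singleton] at hvF' ⊢
      rcases hvF' with rfl | rfl | rfl
      · exact Or.inl rfl
      · exact absurd hv hynot_j
      · exact Or.inr rfl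
    exact Finset.eq_of_subset_of_card_le hsubxw (by
      rw [Finset.card_insert_of_notMem (by simp [hwx.symm]), Finset.card_singleton,
        zz_edge_card Z.isZigzag (j-1)])
  have hpair0 : Z.seq (j-1) = Z.seq m₂ := by
    rw [hsjm1, hsm₂]; exact Finset.pair_comm x w
  have hpair1 : Z.seq ((j-1)+1) = Z.seq (m₂+1) := by
    rw [show j - 1 + 1 = j by omega, hsj, hsm₂1]
  have hm₂j : m₂ = j - 1 := by
    rcases le_or_gt (j-1) m₂ with hle | hlt
    · have hdvd2 := Z.pair_eq_dvd hle hpair0 hpair1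
      rcases Nat.eq_zero_or_pos (m₂ - (j-1)) with h0 | h0
      · omega
      · have := Nat.le_of_dvd h0 hdvd2
        omega
    · have hdvd2 := Z.pair_eq_dvd (le_of_lt hlt) hpair0.symm hpair1.symm
      rcases Nat.eq_zero_or_pos ((j-1) - m₂) with h0 | h0
      · omega
      · have := Nat.le_of_dvd h0 hdvd2
        omega
  -- assemble
  refine ⟨Z, i, j, j₂, i+1, m, m₂, by omega, by omega, by omega, by omega, by omega,
    by omega, ⟨hF, hsubiF, hsubi1F⟩, ⟨hF, hsubjF, hsubj1F⟩, ⟨hF, hsubj₂F, hsubj₂1F⟩,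
    ⟨hF', hsubi1F', by rw [show i+1+1 = i+2 by omega]; exact hsubi2F'⟩,
    ⟨hF', hsubmF', hsubm1F'⟩, ⟨hF', hsubm₂F', hsubm₂1F'⟩, ?_, ?_, ?_⟩
  · intro k hk1 hk2 hSh
    exact hExF k hk1 (by omega) hSh
  · intro k hk1 hk2 hSh
    rcases Nat.eq_or_lt_of_le hk1 with rfl | hk1'
    · exact absurd ((shadow_face Z hSh).trans hFun).symm hne
    · exact hExF' k (by omega) (by omega) hSh
  · rintro Z' ⟨s, hs⟩ -
    have hs0 : Z'.seq s ⊆ F := hs.2.1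
    have hs1 : Z'.seq (s+1) ⊆ F := hs.2.2
    have hc0 := zz_edge_card Z'.isZigzag s
    have hc1 := zz_edge_card Z'.isZigzag (s+1)
    have hne01 : Z'.seq s ≠ Z'.seq (s+1) := (Z'.isZigzag.2.1 s).1
    rw [hFeq] at hs0 hs1
    rcases two_subsets hxy hty.symm htx.symm hs0 hc0 with h0 | h0 | h0 <;>
      rcases two_subsets hxy hty.symm htx.symm hs1 hc1 with h9 | h9 | h9
    · exact absurd (h0.trans h9.symm) hne01
    · exact Or.inl (align_equiv Z Z' j s
        (agree_fwd Z'.isZigzag Z.isZigzag (by rw [h0, hsj]) (by rw [h9, hsj1])))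
    · exact Or.inr (align_rev Z Z' i s (by rw [h0, hseqi1]) (by rw [h9, hseqi]))
    · exact Or.inr (align_rev Z Z' j s (by rw [h0, hsj1]) (by rw [h9, hsj]))
    · exact absurd (h0.trans h9.symm) hne01
    · exact Or.inl (align_equiv Z Z' j₂ s
        (agree_fwd Z'.isZigzag Z.isZigzag (by rw [h0, hsj₂]) (by rw [h9, hsj₂1])))
    · exact Or.inl (align_equiv Z Z' i s
        (agree_fwd Z'.isZigzag Z.isZigzag (by rw [h0, hseqi]) (by rw [h9, hseqi1])))
    · exact Or.inr (align_rev Z Z' j₂ s (by rw [h0, hsj₂1]) (by rw [h9, hsj₂]))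
    · exact absurd (h0.trans h9.symm) hne01
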